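/- Let V : {(X, Y, Z) ∈ ℝ³ : X + Y > 0} → ℝ be given by V(X, Y, Z) = Z(3X² − 3Y² − 5Z²)/(X + Y)^{7/2}. Then V satisfies the wave equation ∂²V/∂X² − ∂²V/∂Y² − ∂²V/∂Z² = 0 at every point with X + Y > 0. -/

import Mathlib

lemma rpow_affine_hasDerivAt (c t x : ℝ) (hx : 0 < x + c) :
    HasDerivAt (fun x : ℝ => (x + c) ^ t) (t * (x + c) ^ (t - 1)) x := by
  have h1 : HasDerivAt (fun x : ℝ => x + c) 1 x := (hasDerivAt_id x).add_const c
  have h2 := Real.hasDerivAt_rpow_const (x := x + c) (p := t) (Or.inl hx.ne')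
  have h3 := h2.comp x h1
  simp only [mul_one] at h3
  exact h3

lemma mul_rpow_hasDerivAt {p : ℝ → ℝ} {p' : ℝ} (c t x : ℝ) (hp : HasDerivAt p p' x)
    (hx : 0 < x + c) :
    HasDerivAt (fun x => p x * (x + c) ^ t)
      (p' * (x + c) ^ t + p x * (t * (x + c) ^ (t - 1))) x :=
  hp.mul (rpow_affine_hasDerivAt c t x hx)

lemma poly_hasDerivAt (a b x : ℝ) : HasDerivAt (fun x : ℝ => a * x ^ 2 + b) (a * (2 * x)) x := by
  simpa using (((hasDerivAt_pow 2 x).const_mul a).add_const b)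

lemma second_deriv (a b c t X : ℝ) (h : 0 < X + c) :
    deriv (deriv (fun x : ℝ => (a * x ^ 2 + b) * (x + c) ^ t)) X
    = 2 * a * (X + c) ^ t + 4 * a * X * t * (X + c) ^ (t - 1)
      + (a * X ^ 2 + b) * t * (t - 1) * (X + c) ^ (t - 2) := by
  have hopen : IsOpen {x : ℝ | 0 < x + c} :=
    isOpen_lt continuous_const (by continuity)
  have hmem : {x : ℝ | 0 < x + c} ∈ nhds X := hopen.mem_nhds h
  have hev : deriv (fun x : ℝ => (a * x ^ 2 + b) * (x + c) ^ t)
      =ᶠ[nhds X] fun x => (2 * a * x) * (x + c) ^ t + (t * (a * x ^ 2 + b)) * (x + c) ^ (t - 1) := by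
    filter_upwards [hmem] with x hx
    have := (mul_rpow_hasDerivAt c t x (poly_hasDerivAt a b x) hx).deriv
    rw [this]; ring
  rw [hev.deriv_eq]
  have h1 : HasDerivAt (fun x : ℝ => (2 * a * x) * (x + c) ^ t)
      ((2 * a) * (X + c) ^ t + (2 * a * X) * (t * (X + c) ^ (t - 1))) X :=
    mul_rpow_hasDerivAt c t X (by simpa using (hasDerivAt_id X).const_mul (2 * a)) h
  have h2 : HasDerivAt (fun x : ℝ => (t * (a * x ^ 2 + b)) * (x + c) ^ (t - 1))
      ((t * (a * (2 * X))) * (X + c) ^ (t - 1)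
        + (t * (a * X ^ 2 + b)) * ((t - 1) * (X + c) ^ (t - 1 - 1))) X :=
    mul_rpow_hasDerivAt c (t - 1) X (by simpa using (poly_hasDerivAt a b X).const_mul t) h
  have h12 : HasDerivAt (fun x : ℝ => (2 * a * x) * (x + c) ^ t + (t * (a * x ^ 2 + b)) * (x + c) ^ (t - 1)) _ X := h1.add h2
  rw [h12.deriv]
  have : t - 1 - 1 = t - 2 := by ring
  rw [this]; ring

theorem stmt_5 (X Y Z : ℝ) (h : 0 < X + Y) :
    iteratedDeriv 2 (fun x : ℝ => Z * (3 * x ^ 2 - 3 * Y ^ 2 - 5 * Z ^ 2) / (x + Y) ^ ((7 : ℝ) / 2)) X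
    - iteratedDeriv 2 (fun y : ℝ => Z * (3 * X ^ 2 - 3 * y ^ 2 - 5 * Z ^ 2) / (X + y) ^ ((7 : ℝ) / 2)) Y
    - iteratedDeriv 2 (fun z : ℝ => z * (3 * X ^ 2 - 3 * Y ^ 2 - 5 * z ^ 2) / (X + Y) ^ ((7 : ℝ) / 2)) Z
    = 0 := by
  have hid2 : ∀ f : ℝ → ℝ, iteratedDeriv 2 f = deriv (deriv f) := by
    intro f
    rw [show (2 : ℕ) = 1 + 1 from rfl, iteratedDeriv_succ, iteratedDeriv_one]
  set t : ℝ := -((7 : ℝ) / 2) with ht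
  -- X part
  have hopenX : IsOpen {x : ℝ | 0 < x + Y} := isOpen_lt continuous_const (by continuity)
  have hevX : (fun x : ℝ => Z * (3 * x ^ 2 - 3 * Y ^ 2 - 5 * Z ^ 2) / (x + Y) ^ ((7 : ℝ) / 2))
      =ᶠ[nhds X] fun x => (3 * Z * x ^ 2 + (-3 * Z * Y ^ 2 - 5 * Z ^ 3)) * (x + Y) ^ t := by
    filter_upwards [hopenX.mem_nhds h] with x hx
    rw [ht, Real.rpow_neg (le_of_lt hx), div_eq_mul_inv]
    ring
  have hX : iteratedDeriv 2
      (fun x : ℝ => Z * (3 * x ^ 2 - 3 * Y ^ 2 - 5 * Z ^ 2) / (x + Y) ^ ((7 : ℝ) / 2)) X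
      = 2 * (3 * Z) * (X + Y) ^ t + 4 * (3 * Z) * X * t * (X + Y) ^ (t - 1)
        + (3 * Z * X ^ 2 + (-3 * Z * Y ^ 2 - 5 * Z ^ 3)) * t * (t - 1) * (X + Y) ^ (t - 2) := by
    rw [hid2, (hevX.deriv.deriv_eq)]
    exact second_deriv (3 * Z) (-3 * Z * Y ^ 2 - 5 * Z ^ 3) Y t X h
  -- Y part
  have hopenY : IsOpen {y : ℝ | 0 < y + X} := isOpen_lt continuous_const (by continuity)
  have hY0 : 0 < Y + X := by linarith
  have hevY : (fun y : ℝ => Z * (3 * X ^ 2 - 3 * y ^ 2 - 5 * Z ^ 2) / (X + y) ^ ((7 : ℝ) / 2))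
      =ᶠ[nhds Y] fun y => ((-3 * Z) * y ^ 2 + (3 * Z * X ^ 2 - 5 * Z ^ 3)) * (y + X) ^ t := by
    filter_upwards [hopenY.mem_nhds hY0] with y hy
    rw [ht, Real.rpow_neg (le_of_lt hy), div_eq_mul_inv, add_comm X y]
    ring
  have hY : iteratedDeriv 2
      (fun y : ℝ => Z * (3 * X ^ 2 - 3 * y ^ 2 - 5 * Z ^ 2) / (X + y) ^ ((7 : ℝ) / 2)) Y
      = 2 * (-3 * Z) * (Y + X) ^ t + 4 * (-3 * Z) * Y * t * (Y + X) ^ (t - 1)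
        + ((-3 * Z) * Y ^ 2 + (3 * Z * X ^ 2 - 5 * Z ^ 3)) * t * (t - 1) * (Y + X) ^ (t - 2) := by
    rw [hid2, (hevY.deriv.deriv_eq)]
    exact second_deriv (-3 * Z) (3 * Z * X ^ 2 - 5 * Z ^ 3) X t Y hY0
  -- Z part
  have hZ : iteratedDeriv 2
      (fun z : ℝ => z * (3 * X ^ 2 - 3 * Y ^ 2 - 5 * z ^ 2) / (X + Y) ^ ((7 : ℝ) / 2)) Z
      = -30 * Z / (X + Y) ^ ((7 : ℝ) / 2) := by
    set K : ℝ := (X + Y) ^ ((7 : ℝ) / 2) with hK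
    have heq : (fun z : ℝ => z * (3 * X ^ 2 - 3 * Y ^ 2 - 5 * z ^ 2) / K)
        = fun z => (-5 * K⁻¹) * z ^ 3 + ((3 * X ^ 2 - 3 * Y ^ 2) * K⁻¹) * z := by
      funext w; rw [div_eq_mul_inv]; ring
    have hd1 : deriv (fun z : ℝ => z * (3 * X ^ 2 - 3 * Y ^ 2 - 5 * z ^ 2) / K)
        = fun z => (-15 * K⁻¹) * z ^ 2 + (3 * X ^ 2 - 3 * Y ^ 2) * K⁻¹ := by
      funext z
      have h3 : HasDerivAt (fun z : ℝ => z ^ 3) (3 * z ^ 2) z := by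
        simpa using hasDerivAt_pow 3 z
      have hder : HasDerivAt (fun z : ℝ => z * (3 * X ^ 2 - 3 * Y ^ 2 - 5 * z ^ 2) / K)
          ((-5 * K⁻¹) * (3 * z ^ 2) + (3 * X ^ 2 - 3 * Y ^ 2) * K⁻¹) z := by
        rw [heq]
        have ha : HasDerivAt (fun z : ℝ => -5 * K⁻¹ * z ^ 3) (-5 * K⁻¹ * (3 * z ^ 2)) z := by
          simpa using h3.const_mul (-5 * K⁻¹)
        have hb : HasDerivAt (fun z : ℝ => (3 * X ^ 2 - 3 * Y ^ 2) * K⁻¹ * z)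
            ((3 * X ^ 2 - 3 * Y ^ 2) * K⁻¹) z := by
          simpa using (hasDerivAt_id z).const_mul ((3 * X ^ 2 - 3 * Y ^ 2) * K⁻¹)
        exact ha.add hb
      rw [hder.deriv]; ring
    rw [hid2, hd1]
    have h2 : HasDerivAt (fun z : ℝ => (-15 * K⁻¹) * z ^ 2 + (3 * X ^ 2 - 3 * Y ^ 2) * K⁻¹)
        ((-15 * K⁻¹) * (2 * Z)) Z := poly_hasDerivAt _ _ Z
    rw [h2.deriv, div_eq_mul_inv]; ring
  rw [hX, hY, hZ]
  have hu : (0 : ℝ) < X + Y := h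
  have huYX : Y + X = X + Y := by ring
  rw [huYX]
  have e1 : (X + Y) ^ (t - 1) = (X + Y) ^ t / (X + Y) := by
    rw [Real.rpow_sub hu, Real.rpow_one]
  have e2 : (X + Y) ^ (t - 2) = (X + Y) ^ t / (X + Y) ^ 2 := by
    rw [show t - 2 = t - (2:ℕ) by push_cast; ring, Real.rpow_sub hu, Real.rpow_natCast]
  have e3 : (X + Y) ^ ((7 : ℝ) / 2) = ((X + Y) ^ t)⁻¹ := by
    rw [ht, Real.rpow_neg hu.le, inv_inv]
  rw [e1, e2, e3, ht]
  have hA : (X + Y) ^ (-((7:ℝ)/2)) ≠ 0 := by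
    positivity
  field_simp
  ring
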